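/- Let χ ∈ C²(Ω,ℝ). Define V₁ = ∂_z̄ + (∂_zχ)·C, V̄_conj = ∂_z − (∂_zχ)·C, P w = (Im w, Re w)ᵀ, and H = diag(H^{(0)}, H^{(2)}) with H^{(0)} = −Δ + Σ_k ((∂_kχ)² − ∂_k²χ), H^{(2)} = −Δ + Σ_k ((∂_kχ)² + ∂_k²χ). Then H P w = −4 P (V₁ V̄_conj w) for every twice continuously differentiable complex-valued function w on Ω. -/

import Mathlib

noncomputable section
open Complex

/-- ∂_x of a complex-valued function on ℂ ≅ ℝ². -/
def dx (w : ℂ → ℂ) : ℂ → ℂ := fun z => fderiv ℝ w z 1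

/-- ∂_y of a complex-valued function on ℂ ≅ ℝ². -/
def dy (w : ℂ → ℂ) : ℂ → ℂ := fun z => fderiv ℝ w z Complex.I

/-- ∂_z = (∂_x - i∂_y)/2. -/
def dz (w : ℂ → ℂ) : ℂ → ℂ := fun z => (dx w z - Complex.I * dy w z) / 2

/-- ∂_z̄ = (∂_x + i∂_y)/2. -/
def dzb (w : ℂ → ℂ) : ℂ → ℂ := fun z => (dx w z + Complex.I * dy w z) / 2

/-- A real-valued function viewed as complex-valued. -/
def cc (χ : ℂ → ℝ) : ℂ → ℂ := fun z => (χ z : ℂ)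

/-- V = ∂_z̄ - (∂_z̄χ)·C. -/
def Vop (χ : ℂ → ℝ) (w : ℂ → ℂ) : ℂ → ℂ :=
  fun z => dzb w z - dzb (cc χ) z * (starRingEnd ℂ) (w z)

/-- V̄ = ∂_z - (∂_zχ)·C. -/
def Vbar (χ : ℂ → ℝ) (w : ℂ → ℂ) : ℂ → ℂ :=
  fun z => dz w z - dz (cc χ) z * (starRingEnd ℂ) (w z)

/-- V₁ = ∂_z̄ + (∂_zχ)·C. -/
def V1 (χ : ℂ → ℝ) (w : ℂ → ℂ) : ℂ → ℂ :=
  fun z => dzb w z + dz (cc χ) z * (starRingEnd ℂ) (w z)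

/-- V̄₁ = ∂_z + (∂_z̄χ)·C. -/
def Vbar1 (χ : ℂ → ℝ) (w : ℂ → ℂ) : ℂ → ℂ :=
  fun z => dz w z + dzb (cc χ) z * (starRingEnd ℂ) (w z)

/-- Partial derivative ∂_i of a real-valued function on ℂ ≅ ℝ². -/
def pdc (i : Fin 2) (f : ℂ → ℝ) : ℂ → ℝ :=
  fun z => fderiv ℝ f z (if i = 0 then 1 else Complex.I)

/-- H^{(0)} = -Δ + Σ_k ((∂_kχ)² - ∂_k²χ) acting on real functions on ℂ. -/
def H0c (χ f : ℂ → ℝ) : ℂ → ℝ := fun z =>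
  -(pdc 0 (pdc 0 f) z + pdc 1 (pdc 1 f) z) +
    (∑ k : Fin 2, ((pdc k χ z) ^ 2 - pdc k (pdc k χ) z)) * f z

/-- H^{(2)} = -Δ + Σ_k ((∂_kχ)² + ∂_k²χ). -/
def H2c (χ f : ℂ → ℝ) : ℂ → ℝ := fun z =>
  -(pdc 0 (pdc 0 f) z + pdc 1 (pdc 1 f) z) +
    (∑ k : Fin 2, ((pdc k χ z) ^ 2 + pdc k (pdc k χ) z)) * f z

/-- H^{(1)}_{ij} = δ_{ij} H^{(0)} + 2∂_i∂_jχ. -/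
def H1c (χ : ℂ → ℝ) (i j : Fin 2) (f : ℂ → ℝ) : ℂ → ℝ := fun z =>
  (if i = j then H0c χ f z else 0) + 2 * pdc i (pdc j χ) z * f z


section Helpers

lemma fd_clm_comp {E F G : Type*} [NormedAddCommGroup E] [NormedSpace ℝ E]
    [NormedAddCommGroup F] [NormedSpace ℝ F] [NormedAddCommGroup G] [NormedSpace ℝ G]
    {f : E → F} {z : E} (hf : DifferentiableAt ℝ f z) (L : F →L[ℝ] G) (v : E) :
    fderiv ℝ (fun y => L (f y)) z v = L (fderiv ℝ f z v) := by
  rw [show (fun y => L (f y)) = ⇑L ∘ f from rfl, (L.hasFDerivAt.comp z hf.hasFDerivAt).fderiv]; rfl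

lemma fderiv2_apply {F : Type*} [NormedAddCommGroup F] [NormedSpace ℝ F]
    {f : ℂ → F} {z : ℂ} (hf : ContDiffAt ℝ 2 f z) (u v : ℂ) :
    fderiv ℝ (fun y => fderiv ℝ f y v) z u = fderiv ℝ (fderiv ℝ f) z u v := by
  have h1 : DifferentiableAt ℝ (fderiv ℝ f) z :=
    (hf.fderiv_right (m := 1) (by norm_num)).differentiableAt one_ne_zero
  rw [fderiv_clm_apply h1 (differentiableAt_const v)]
  simp

lemma fd_sub {f g : ℂ → ℂ} {z : ℂ} (hf : DifferentiableAt ℝ f z) (hg : DifferentiableAt ℝ g z) (v : ℂ) :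
    fderiv ℝ (fun y => f y - g y) z v = fderiv ℝ f z v - fderiv ℝ g z v := by
  rw [fderiv_fun_sub hf hg]; rfl

lemma fd_mul {f g : ℂ → ℂ} {z : ℂ} (hf : DifferentiableAt ℝ f z) (hg : DifferentiableAt ℝ g z) (v : ℂ) :
    fderiv ℝ (fun y => f y * g y) z v = fderiv ℝ f z v * g z + f z * fderiv ℝ g z v := by
  rw [fderiv_fun_mul hf hg]; simp [smul_eq_mul]; ring

lemma fd_div2 {f : ℂ → ℂ} {z : ℂ} (hf : DifferentiableAt ℝ f z) (v : ℂ) :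
    fderiv ℝ (fun y => f y / 2) z v = fderiv ℝ f z v / 2 := by
  simp only [div_eq_mul_inv]
  rw [fderiv_mul_const hf]
  simp [smul_eq_mul]; ring

lemma fd_const_mul {f : ℂ → ℂ} {z : ℂ} (hf : DifferentiableAt ℝ f z) (c v : ℂ) :
    fderiv ℝ (fun y => c * f y) z v = c * fderiv ℝ f z v := by
  rw [fderiv_const_mul hf]; rfl

lemma fd_conj {f : ℂ → ℂ} {z : ℂ} (hf : DifferentiableAt ℝ f z) (v : ℂ) :
    fderiv ℝ (fun y => (starRingEnd ℂ) (f y)) z v = (starRingEnd ℂ) (fderiv ℝ f z v) := by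
  simpa using fd_clm_comp hf (Complex.conjCLE : ℂ →L[ℝ] ℂ) v

lemma fd_ofReal {f : ℂ → ℝ} {z : ℂ} (hf : DifferentiableAt ℝ f z) (v : ℂ) :
    fderiv ℝ (fun y => ((f y : ℝ) : ℂ)) z v = ((fderiv ℝ f z v : ℝ) : ℂ) := by
  simpa using fd_clm_comp hf Complex.ofRealCLM v

lemma fd_im {f : ℂ → ℂ} {z : ℂ} (hf : DifferentiableAt ℝ f z) (v : ℂ) :
    fderiv ℝ (fun y => (f y).im) z v = (fderiv ℝ f z v).im := by
  simpa using fd_clm_comp hf Complex.imCLM v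

lemma fd_re {f : ℂ → ℂ} {z : ℂ} (hf : DifferentiableAt ℝ f z) (v : ℂ) :
    fderiv ℝ (fun y => (f y).re) z v = (fderiv ℝ f z v).re := by
  simpa using fd_clm_comp hf Complex.reCLM v

lemma diff_ofReal {f : ℂ → ℝ} {z : ℂ} (hf : DifferentiableAt ℝ f z) :
    DifferentiableAt ℝ (fun y => ((f y : ℝ) : ℂ)) z :=
  Complex.ofRealCLM.differentiableAt.comp z hf

lemma diff_conj {f : ℂ → ℂ} {z : ℂ} (hf : DifferentiableAt ℝ f z) :
    DifferentiableAt ℝ (fun y => (starRingEnd ℂ) (f y)) z := hf.star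

lemma diff_div2 {f : ℂ → ℂ} {z : ℂ} (hf : DifferentiableAt ℝ f z) :
    DifferentiableAt ℝ (fun y => f y / 2) z := by
  simpa [div_eq_mul_inv] using hf.mul_const ((2:ℂ)⁻¹)

end Helpers

lemma pdc_zero (f : ℂ → ℝ) : pdc 0 f = fun y => fderiv ℝ f y 1 := rfl

lemma pdc_one (f : ℂ → ℝ) : pdc 1 f = fun y => fderiv ℝ f y Complex.I := rfl

/-- H P w = -4 P (V₁ V̄ w) for every C² complex-valued function w. -/
theorem H_P_factorization (Ω : Set ℂ) (hΩ : IsOpen Ω)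
    (χ : ℂ → ℝ) (hχ : ContDiffOn ℝ 2 χ Ω)
    (w : ℂ → ℂ) (hw : ContDiffOn ℝ 2 w Ω) :
    ∀ z ∈ Ω,
      H0c χ (fun ζ => (w ζ).im) z = -4 * (V1 χ (Vbar χ w) z).im ∧
      H2c χ (fun ζ => (w ζ).re) z = -4 * (V1 χ (Vbar χ w) z).re := by
  intro z hz
  have hmem : Ω ∈ nhds z := hΩ.mem_nhds hz
  have hwd : ∀ y ∈ Ω, DifferentiableAt ℝ w y := fun y hy =>
    (hw.contDiffAt (hΩ.mem_nhds hy)).differentiableAt two_ne_zero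
  have hχd : ∀ y ∈ Ω, DifferentiableAt ℝ χ y := fun y hy =>
    (hχ.contDiffAt (hΩ.mem_nhds hy)).differentiableAt two_ne_zero
  have hw2 : ContDiffAt ℝ 2 w z := hw.contDiffAt hmem
  have hχ2 : ContDiffAt ℝ 2 χ z := hχ.contDiffAt hmem
  have hw1 : DifferentiableAt ℝ (fderiv ℝ w) z :=
    (hw2.fderiv_right (m := 1) (by norm_num)).differentiableAt one_ne_zero
  have hχ1 : DifferentiableAt ℝ (fderiv ℝ χ) z :=
    (hχ2.fderiv_right (m := 1) (by norm_num)).differentiableAt one_ne_zero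
  have hdw : ∀ v : ℂ, DifferentiableAt ℝ (fun y => fderiv ℝ w y v) z :=
    fun v => hw1.clm_apply (differentiableAt_const v)
  have hdχ : ∀ v : ℂ, DifferentiableAt ℝ (fun y => fderiv ℝ χ y v) z :=
    fun v => hχ1.clm_apply (differentiableAt_const v)
  -- symmetry of second derivatives
  have hsW : fderiv ℝ (fderiv ℝ w) z Complex.I 1 = fderiv ℝ (fderiv ℝ w) z 1 Complex.I :=
    hw2.isSymmSndFDerivAt (by simp [minSmoothness_of_isRCLikeNormedField]) Complex.I 1
  have hsX : fderiv ℝ (fderiv ℝ χ) z Complex.I 1 = fderiv ℝ (fderiv ℝ χ) z 1 Complex.I :=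
    hχ2.isSymmSndFDerivAt (by simp [minSmoothness_of_isRCLikeNormedField]) Complex.I 1
  -- second derivatives of im/re parts
  have hIm2 : ∀ u v : ℂ, fderiv ℝ (fun y => fderiv ℝ (fun t => (w t).im) y v) z u
      = (fderiv ℝ (fderiv ℝ w) z u v).im := by
    intro u v
    have he : (fun y => fderiv ℝ (fun t => (w t).im) y v) =ᶠ[nhds z]
        (fun y => (fderiv ℝ w y v).im) := by
      filter_upwards [hmem] with y hy
      exact fd_im (hwd y hy) v
    rw [he.fderiv_eq, fd_im (hdw v) u, fderiv2_apply hw2 u v]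
  have hRe2 : ∀ u v : ℂ, fderiv ℝ (fun y => fderiv ℝ (fun t => (w t).re) y v) z u
      = (fderiv ℝ (fderiv ℝ w) z u v).re := by
    intro u v
    have he : (fun y => fderiv ℝ (fun t => (w t).re) y v) =ᶠ[nhds z]
        (fun y => (fderiv ℝ w y v).re) := by
      filter_upwards [hmem] with y hy
      exact fd_re (hwd y hy) v
    rw [he.fderiv_eq, fd_re (hdw v) u, fderiv2_apply hw2 u v]
  have hX2 : ∀ u v : ℂ, fderiv ℝ (fun y => fderiv ℝ χ y v) z u
      = fderiv ℝ (fderiv ℝ χ) z u v := fun u v => fderiv2_apply hχ2 u v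
  -- values of first derivatives of cc χ
  have hccz : ∀ v : ℂ, fderiv ℝ (fun y => ((χ y : ℝ) : ℂ)) z v = ((fderiv ℝ χ z v : ℝ) : ℂ) :=
    fun v => fd_ofReal (hχd z hz) v
  -- the function Vbar χ w agrees near z with an explicit expression
  have hVG : Vbar χ w =ᶠ[nhds z]
      (fun y => (fderiv ℝ w y 1 - Complex.I * fderiv ℝ w y Complex.I) / 2 -
        (((fderiv ℝ χ y 1 : ℝ) : ℂ) - Complex.I * ((fderiv ℝ χ y Complex.I : ℝ) : ℂ)) / 2 *
          (starRingEnd ℂ) (w y)) := by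
    filter_upwards [hmem] with y hy
    simp only [Vbar, dz, dx, dy]
    rw [show cc χ = fun t => ((χ t : ℝ) : ℂ) from rfl,
      fd_ofReal (hχd y hy) 1, fd_ofReal (hχd y hy) Complex.I]
  -- differentiability of the pieces
  have hq1 : DifferentiableAt ℝ
      (fun y => (fderiv ℝ w y 1 - Complex.I * fderiv ℝ w y Complex.I) / 2) z :=
    diff_div2 ((hdw 1).sub ((hdw Complex.I).const_mul Complex.I))
  have hgχd : DifferentiableAt ℝ
      (fun y => (((fderiv ℝ χ y 1 : ℝ) : ℂ) -
        Complex.I * ((fderiv ℝ χ y Complex.I : ℝ) : ℂ)) / 2) z :=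
    diff_div2 ((diff_ofReal (hdχ 1)).sub ((diff_ofReal (hdχ Complex.I)).const_mul Complex.I))
  have hcwd : DifferentiableAt ℝ (fun y => (starRingEnd ℂ) (w y)) z := diff_conj (hwd z hz)
  have hq2 : DifferentiableAt ℝ
      (fun y => (((fderiv ℝ χ y 1 : ℝ) : ℂ) -
        Complex.I * ((fderiv ℝ χ y Complex.I : ℝ) : ℂ)) / 2 * (starRingEnd ℂ) (w y)) z :=
    hgχd.mul hcwd
  -- directional derivatives of Vbar χ w at z
  have hD : ∀ v : ℂ, fderiv ℝ (Vbar χ w) z v =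
      (fderiv ℝ (fderiv ℝ w) z v 1 - Complex.I * fderiv ℝ (fderiv ℝ w) z v Complex.I) / 2 -
      ((((fderiv ℝ (fderiv ℝ χ) z v 1 : ℝ) : ℂ) -
          Complex.I * ((fderiv ℝ (fderiv ℝ χ) z v Complex.I : ℝ) : ℂ)) / 2 *
        (starRingEnd ℂ) (w z) +
      (((fderiv ℝ χ z 1 : ℝ) : ℂ) - Complex.I * ((fderiv ℝ χ z Complex.I : ℝ) : ℂ)) / 2 *
        (starRingEnd ℂ) (fderiv ℝ w z v)) := by
    intro v
    rw [hVG.fderiv_eq]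
    rw [fd_sub hq1 hq2 v,
      fd_div2 ((hdw 1).fun_sub ((hdw Complex.I).const_mul Complex.I)) v,
      fd_sub (hdw 1) ((hdw Complex.I).const_mul Complex.I) v,
      fd_const_mul (hdw Complex.I) Complex.I v,
      fd_mul hgχd hcwd v,
      fd_div2 ((diff_ofReal (hdχ 1)).fun_sub ((diff_ofReal (hdχ Complex.I)).const_mul Complex.I)) v,
      fd_sub (diff_ofReal (hdχ 1)) ((diff_ofReal (hdχ Complex.I)).const_mul Complex.I) v,
      fd_const_mul (diff_ofReal (hdχ Complex.I)) Complex.I v,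
      fd_ofReal (hdχ 1) v, fd_ofReal (hdχ Complex.I) v,
      fd_conj (hwd z hz) v,
      fderiv2_apply hw2 v 1, fderiv2_apply hw2 v Complex.I,
      fderiv2_apply hχ2 v 1, fderiv2_apply hχ2 v Complex.I]
  -- value of Vbar χ w at z
  have hVbarz : Vbar χ w z =
      (fderiv ℝ w z 1 - Complex.I * fderiv ℝ w z Complex.I) / 2 -
      (((fderiv ℝ χ z 1 : ℝ) : ℂ) - Complex.I * ((fderiv ℝ χ z Complex.I : ℝ) : ℂ)) / 2 *
        (starRingEnd ℂ) (w z) := by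
    simp only [Vbar, dz, dx, dy]
    rw [show cc χ = fun t => ((χ t : ℝ) : ℂ) from rfl, hccz 1, hccz Complex.I]
  -- assemble
  simp only [H0c, H2c, Fin.sum_univ_two, pdc_zero, pdc_one, V1, dzb, dz, dx, dy]
  rw [show cc χ = fun t => ((χ t : ℝ) : ℂ) from rfl, hD 1, hD Complex.I, hVbarz, hccz 1, hccz Complex.I,
    hIm2 1 1, hIm2 Complex.I Complex.I, hRe2 1 1, hRe2 Complex.I Complex.I,
    hX2 1 1, hX2 Complex.I Complex.I, hsW, hsX]
  generalize fderiv ℝ (fderiv ℝ w) z 1 1 = a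
  generalize fderiv ℝ (fderiv ℝ w) z 1 Complex.I = b
  generalize fderiv ℝ (fderiv ℝ w) z Complex.I Complex.I = c
  generalize fderiv ℝ (fderiv ℝ χ) z 1 1 = p
  generalize fderiv ℝ (fderiv ℝ χ) z 1 Complex.I = q
  generalize fderiv ℝ (fderiv ℝ χ) z Complex.I Complex.I = r
  generalize fderiv ℝ χ z 1 = s
  generalize fderiv ℝ χ z Complex.I = t
  generalize fderiv ℝ w z 1 = u
  generalize fderiv ℝ w z Complex.I = v
  generalize w z = m
  constructor <;>
  · simp only [Complex.add_im, Complex.sub_im, Complex.mul_im, Complex.add_re, Complex.sub_re,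
      Complex.mul_re, Complex.I_re, Complex.I_im, Complex.ofReal_re, Complex.ofReal_im,
      Complex.conj_re, Complex.conj_im, Complex.div_ofNat_im, Complex.div_ofNat_re,
      Complex.neg_im, Complex.neg_re]
    ring
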